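/- Let C be a compact subset of P(E) and suppose inf_{ζ∈C} I_d(ζ) > κ > 0, where I_d(ν) = sup_{f∈F_d} ∫ log(f/Pf) dν. Then there exist finitely many functions f₁,…,f_m ∈ F_d such that C ⊆ ⋃_{j=1}^m {ζ : ∫ log(f_j/Pf_j) dζ > κ}, and consequently Q_{k,x}^n(C) ≤ m·d·exp(−κ·Σ_{i=k}^{n+k-1} φ(i)) uniformly in x. -/

import Mathlib

open MeasureTheory ProbabilityTheory

/-- The discounted empirical measure
`S_k^n = (Σ_{i=k}^{n+k-1} φ(i))^{-1} Σ_{i=k}^{n+k-1} φ(i) δ_{X_{i-k}}`. -/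
noncomputable def discountedEmpirical {Ω E : Type*} [MeasurableSpace E]
    (φ : ℕ → ℝ) (k n : ℕ) (X : ℕ → Ω → E) (ω : Ω) : Measure E :=
  (∑ i ∈ Finset.Ico k (n + k), ENNReal.ofReal (φ i))⁻¹ •
    ∑ i ∈ Finset.Ico k (n + k),
      ENNReal.ofReal (φ i) • Measure.dirac (X (i - k) ω)

lemma myIntegrableOfBounded {Ω : Type*} [MeasurableSpace Ω] (μ : Measure Ω) [IsFiniteMeasure μ]
    {g : Ω → ℝ} (hm : AEStronglyMeasurable g μ) (B : ℝ) (h : ∀ ω, |g ω| ≤ B) :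
    Integrable g μ :=
  (integrable_const B).mono' hm (Filter.Eventually.of_forall (by simpa [Real.norm_eq_abs] using h))

/-- basic facts about `f ↦ Pf` for `f ∈ F_d`. -/
lemma myRatioFacts {E : Type*} [MeasurableSpace E] [TopologicalSpace E] [OpensMeasurableSpace E]
    (P : Kernel E E) [IsMarkovKernel P]
    (d : ℝ) (hd : 1 ≤ d) (f : E → ℝ) (hfc : Continuous f) (hf1 : ∀ y, 1 ≤ f y)
    (hfd : ∀ y z, f y ≤ d * f z) (B : ℝ) (hfB : ∀ y, f y ≤ B) :
    (∀ y, 1 ≤ ∫ z, f z ∂(P y)) ∧ (∀ y, (∫ z, f z ∂(P y)) ≤ B) ∧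
      (∀ y, 1 / d ≤ f y / ∫ z, f z ∂(P y)) ∧ (∀ y, f y / ∫ z, f z ∂(P y) ≤ d) := by
  have hd0 : (0:ℝ) < d := lt_of_lt_of_le zero_lt_one hd
  have hfint : ∀ y, Integrable f (P y) := fun y => myIntegrableOfBounded _
    hfc.aestronglyMeasurable B (fun z => abs_le.mpr ⟨by linarith [hf1 z, hfB z], hfB z⟩)
  have hPf1 : ∀ y, (1:ℝ) ≤ ∫ z, f z ∂(P y) := fun y => by
    have := integral_mono (integrable_const (1:ℝ)) (hfint y) hf1
    simpa using this
  have hPfB : ∀ y, (∫ z, f z ∂(P y)) ≤ B := fun y => by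
    have := integral_mono (hfint y) (integrable_const B) hfB
    simpa using this
  have hPfpos : ∀ y, (0:ℝ) < ∫ z, f z ∂(P y) :=
    fun y => lt_of_lt_of_le zero_lt_one (hPf1 y)
  refine ⟨hPf1, hPfB, fun y => ?_, fun y => ?_⟩
  · rw [div_le_div_iff₀ hd0 (hPfpos y), one_mul]
    have : Integrable (fun z => d * f y) (P y) := integrable_const _
    have h2 := integral_mono (hfint y) this (fun z => hfd z y)
    simpa [mul_comm] using h2
  · rw [div_le_iff₀ (hPfpos y)]
    have h1 : ∀ z, f y / d ≤ f z := fun z => (div_le_iff₀' hd0).mpr (hfd y z)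
    have h2 := integral_mono (integrable_const (f y / d)) (hfint y) h1
    simp only [integral_const, measure_univ, probReal_univ, ENNReal.toReal_one, smul_eq_mul, one_mul] at h2
    calc f y = d * (f y / d) := by field_simp
    _ ≤ d * ∫ z, f z ∂(P y) := by
        exact mul_le_mul_of_nonneg_left h2 hd0.le



/-- rpow with exponent in [0,1] of a value in [0,B] (B ≥ 1) is at most B. -/
lemma myRpowLe {x B a : ℝ} (hx : 0 ≤ x) (hxB : x ≤ B) (hB : 1 ≤ B) (ha0 : 0 ≤ a) (ha1 : a ≤ 1) :
    x ^ a ≤ B := by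
  rcases le_total x 1 with h | h
  · exact (Real.rpow_le_one hx h ha0).trans hB
  · calc x ^ a ≤ x ^ (1:ℝ) := Real.rpow_le_rpow_of_exponent_le h ha1
    _ = x := Real.rpow_one x
    _ ≤ B := hxB


/-- key telescoping product estimate. -/
lemma mySumAbel {d : ℝ} (hd : 1 ≤ d) (c : ℕ → ℝ) (hc0 : ∀ j, 0 ≤ c j)
    (hcd : ∀ j l, c j ≤ Real.log d + c l)
    (a : ℕ → ℝ) (hap : ∀ j, 0 < a j) (ha1 : a 0 ≤ 1)
    (hamono : ∀ i j, i ≤ j → a j ≤ a i) (n : ℕ) :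
    ∑ j ∈ Finset.range n, a j * (c j - c (j + 1)) ≤ Real.log d := by
  have hL0 : 0 ≤ Real.log d := Real.log_nonneg hd
  rcases Nat.eq_zero_or_pos n with rfl | hn
  · simpa using hL0
  obtain ⟨m, rfl⟩ : ∃ m, n = m + 1 := ⟨n - 1, (Nat.succ_pred_eq_of_pos hn).symm⟩
  have key : ∀ m : ℕ, ∑ j ∈ Finset.range (m + 1), a j * (c j - c (j + 1)) ≤
      a 0 * c 0 - a m * c (m + 1) + (a 0 - a m) * (Real.log d - c 0) := by
    intro m
    induction m with
    | zero => simp [mul_sub]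
    | succ p ih =>
      rw [Finset.sum_range_succ]
      have h1 : a (p + 1) ≤ a p := hamono p (p + 1) (Nat.le_succ p)
      have h2 : c 0 ≤ Real.log d + c (p + 1) := hcd 0 (p + 1)
      nlinarith [ih]
  have h := key m
  have h2 : c 0 ≤ Real.log d + c (m + 1) := hcd 0 (m + 1)
  have h3 : 0 < a m := hap m
  have h4 : a 0 ≤ 1 := ha1
  have h5 : 0 < a 0 := hap 0
  nlinarith

/-- telescoping bound: `∏_{j<n} (b j / b (j+1)) ^ (a j) ≤ d`. -/
lemma myProdTelescope {d : ℝ} (hd : 1 ≤ d) (b : ℕ → ℝ) (hb1 : ∀ j, 1 ≤ b j)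
    (hbd : ∀ j l, b j ≤ d * b l)
    (a : ℕ → ℝ) (hap : ∀ j, 0 < a j) (ha1 : a 0 ≤ 1)
    (hamono : ∀ i j, i ≤ j → a j ≤ a i) (n : ℕ) :
    ∏ j ∈ Finset.range n, (b j / b (j + 1)) ^ a j ≤ d := by
  have hbpos : ∀ j, 0 < b j := fun j => lt_of_lt_of_le zero_lt_one (hb1 j)
  have hprod : ∏ j ∈ Finset.range n, (b j / b (j + 1)) ^ a j =
      Real.exp (∑ j ∈ Finset.range n, a j * (Real.log (b j) - Real.log (b (j + 1)))) := by
    rw [Real.exp_sum]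
    refine Finset.prod_congr rfl fun j _ => ?_
    rw [Real.rpow_def_of_pos (div_pos (hbpos j) (hbpos (j + 1))),
      Real.log_div (ne_of_gt (hbpos j)) (ne_of_gt (hbpos (j + 1))), mul_comm]
  rw [hprod]
  have := mySumAbel hd (fun j => Real.log (b j)) (fun j => Real.log_nonneg (hb1 j))
    (fun j l => by
      have : b j ≤ d * b l := hbd j l
      calc Real.log (b j) ≤ Real.log (d * b l) :=
        Real.log_le_log (hbpos j) this
      _ = Real.log d + Real.log (b l) :=
        Real.log_mul (by linarith) (ne_of_gt (hbpos l)))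
    a hap ha1 hamono n
  calc Real.exp _ ≤ Real.exp (Real.log d) := Real.exp_le_exp.mpr this
  _ = d := Real.exp_log (by linarith)


lemma myJensenRpow {E : Type*} [MeasurableSpace E] [TopologicalSpace E] [OpensMeasurableSpace E]
    (ν : Measure E) [IsProbabilityMeasure ν] (f : E → ℝ) (hfc : Continuous f)
    (hf1 : ∀ y, 1 ≤ f y) (B : ℝ) (hB1 : 1 ≤ B) (hfB : ∀ y, f y ≤ B)
    {a : ℝ} (ha0 : 0 < a) (ha1 : a ≤ 1) :
    ∫ y, f y ^ a ∂ν ≤ (∫ y, f y ∂ν) ^ a := by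
  have hfi : Integrable f ν := myIntegrableOfBounded ν hfc.aestronglyMeasurable B
    (fun y => abs_le.mpr ⟨by linarith [hf1 y], hfB y⟩)
  have hgc : ContinuousOn (fun x : ℝ => x ^ a) (Set.Ici 0) :=
    (Real.continuous_rpow_const ha0.le).continuousOn
  have hgi : Integrable ((fun x : ℝ => x ^ a) ∘ f) ν := by
    refine myIntegrableOfBounded ν ((Real.continuous_rpow_const ha0.le).comp hfc
      |>.aestronglyMeasurable) B (fun y => ?_)
    have h0 : (0:ℝ) ≤ f y := le_trans zero_le_one (hf1 y)
    have : |f y ^ a| = f y ^ a := abs_of_nonneg (Real.rpow_nonneg h0 a)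
    rw [Function.comp_apply, this]
    exact myRpowLe h0 (hfB y) hB1 ha0.le ha1
  exact (Real.concaveOn_rpow ha0.le ha1).le_map_integral hgc isClosed_Ici
    (Filter.Eventually.of_forall fun y => le_trans zero_le_one (hf1 y)) hfi hgi

/-- the Donsker–Varadhan type supermartingale expectation bound. -/
lemma mySupermart {Ω E : Type*} {m0 : MeasurableSpace Ω}
    [MetricSpace E] [MeasurableSpace E] [BorelSpace E]
    (μ : Measure Ω) [IsProbabilityMeasure μ] (ℱ : Filtration ℕ m0)
    (P : Kernel E E) [IsMarkovKernel P]
    (X : ℕ → Ω → E) (hX : ∀ i, Measurable[ℱ i] (X i))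
    (hMarkov : ∀ (g : E → ℝ), Continuous g → ∀ i,
      μ[(fun ω => g (X (i + 1) ω)) | ℱ i] =ᵐ[μ] fun ω => ∫ y, g y ∂(P (X i ω)))
    (f : E → ℝ) (hfc : Continuous f) (hf1 : ∀ y, 1 ≤ f y)
    (B : ℝ) (hB1 : 1 ≤ B) (hfB : ∀ y, f y ≤ B)
    (hPfc : Continuous fun y => ∫ z, f z ∂(P y))
    (hPfac : ∀ a : ℝ, 0 < a → a ≤ 1 → Continuous fun y => ∫ z, f z ^ a ∂(P y))
    (a : ℕ → ℝ) (hap : ∀ j, 0 < a j) (ha1 : ∀ j, a j ≤ 1) :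
    ∀ n, ∫ ω, ∏ j ∈ Finset.range n,
      (f (X (j + 1) ω) / ∫ z, f z ∂(P (X j ω))) ^ a j ∂μ ≤ 1 := by
  have hXm : ∀ i, Measurable (X i) := fun i => (hX i).mono (ℱ.le i) le_rfl
  set Pf : E → ℝ := fun y => ∫ z, f z ∂(P y) with hPfdef
  have hfpos : ∀ y, (0:ℝ) < f y := fun y => lt_of_lt_of_le zero_lt_one (hf1 y)
  have hfint : ∀ y, Integrable f (P y) := fun y => myIntegrableOfBounded _
    hfc.aestronglyMeasurable B (fun z => abs_le.mpr ⟨by linarith [hf1 z], hfB z⟩)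
  have hPf1 : ∀ y, (1:ℝ) ≤ Pf y := fun y => by
    have := integral_mono (integrable_const (1:ℝ)) (hfint y) hf1
    simpa using this
  have hPfB : ∀ y, Pf y ≤ B := fun y => by
    have := integral_mono (hfint y) (integrable_const B) hfB
    simpa using this
  have hPfpos : ∀ y, (0:ℝ) < Pf y := fun y => lt_of_lt_of_le zero_lt_one (hPf1 y)
  have hrat_nonneg : ∀ j ω, (0:ℝ) ≤ f (X (j + 1) ω) / Pf (X j ω) :=
    fun j ω => div_nonneg (hfpos _).le (hPfpos _).le
  have hrat_le : ∀ j ω, f (X (j + 1) ω) / Pf (X j ω) ≤ B := fun j ω =>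
    (div_le_self (hfpos _).le (hPf1 _)).trans (hfB _)
  have hfac_nonneg : ∀ j ω, (0:ℝ) ≤ (f (X (j + 1) ω) / Pf (X j ω)) ^ a j :=
    fun j ω => Real.rpow_nonneg (hrat_nonneg j ω) _
  have hfac_le : ∀ j ω, (f (X (j + 1) ω) / Pf (X j ω)) ^ a j ≤ B :=
    fun j ω => myRpowLe (hrat_nonneg j ω) (hrat_le j ω) hB1 (hap j).le (ha1 j)
  have hprod_nonneg : ∀ m ω, (0:ℝ) ≤ ∏ j ∈ Finset.range m,
      (f (X (j + 1) ω) / Pf (X j ω)) ^ a j :=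
    fun m ω => Finset.prod_nonneg fun j _ => hfac_nonneg j ω
  have hprod_le : ∀ m ω, (∏ j ∈ Finset.range m,
      (f (X (j + 1) ω) / Pf (X j ω)) ^ a j) ≤ B ^ m := fun m ω => by
    calc (∏ j ∈ Finset.range m, (f (X (j + 1) ω) / Pf (X j ω)) ^ a j)
        ≤ ∏ _j ∈ Finset.range m, B :=
          Finset.prod_le_prod (fun j _ => hfac_nonneg j ω) (fun j _ => hfac_le j ω)
      _ = B ^ m := by rw [Finset.prod_const, Finset.card_range]
  have hfacm : ∀ j, Measurable fun ω => (f (X (j + 1) ω) / Pf (X j ω)) ^ a j := fun j =>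
    ((Real.continuous_rpow_const (hap j).le).measurable).comp
      ((hfc.measurable.comp (hXm (j + 1))).div (hPfc.measurable.comp (hXm j)))
  have hprodm : ∀ m, Measurable fun ω => ∏ j ∈ Finset.range m,
      (f (X (j + 1) ω) / Pf (X j ω)) ^ a j :=
    fun m => Finset.measurable_prod _ fun j _ => hfacm j
  intro n
  induction n with
  | zero => simp
  | succ n ih =>
    set F : Ω → ℝ := fun ω =>
      (∏ j ∈ Finset.range n, (f (X (j + 1) ω) / Pf (X j ω)) ^ a j) *
        ((Pf (X n ω)) ^ a n)⁻¹ with hFdef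
    set G : Ω → ℝ := fun ω => f (X (n + 1) ω) ^ a n with hGdef
    have hPfr1 : ∀ ω, (1:ℝ) ≤ (Pf (X n ω)) ^ a n :=
      fun ω => Real.one_le_rpow (hPf1 _) (hap n).le
    have hPfrpos : ∀ ω, (0:ℝ) < (Pf (X n ω)) ^ a n :=
      fun ω => lt_of_lt_of_le zero_lt_one (hPfr1 ω)
    have hFnonneg : ∀ ω, 0 ≤ F ω := fun ω =>
      mul_nonneg (hprod_nonneg n ω) (inv_nonneg.mpr (hPfrpos ω).le)
    have hFle : ∀ ω, F ω ≤ B ^ n := fun ω => by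
      have h1 : ((Pf (X n ω)) ^ a n)⁻¹ ≤ 1 := inv_le_one_of_one_le₀ (hPfr1 ω)
      calc F ω ≤ (∏ j ∈ Finset.range n, (f (X (j + 1) ω) / Pf (X j ω)) ^ a j) * 1 :=
            mul_le_mul_of_nonneg_left h1 (hprod_nonneg n ω)
        _ ≤ B ^ n := by rw [mul_one]; exact hprod_le n ω
    have hGnonneg : ∀ ω, 0 ≤ G ω := fun ω => Real.rpow_nonneg (hfpos _).le _
    have hGle : ∀ ω, G ω ≤ B := fun ω =>
      myRpowLe (hfpos _).le (hfB _) hB1 (hap n).le (ha1 n)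
    have hBn : (0:ℝ) ≤ B ^ n := pow_nonneg (by linarith) n
    have hFmeasF : Measurable[ℱ n] F := by
      have hXF : ∀ j, j ≤ n → Measurable[ℱ n] (X j) :=
        fun j hj => (hX j).mono (ℱ.mono hj) le_rfl
      have h1 : Measurable[ℱ n] fun ω => ∏ j ∈ Finset.range n,
          (f (X (j + 1) ω) / Pf (X j ω)) ^ a j := by
        refine Finset.measurable_prod _ fun j hj => ?_
        have hj' : j + 1 ≤ n := Nat.succ_le_of_lt (Finset.mem_range.mp hj)
        exact ((Real.continuous_rpow_const (hap j).le).measurable).comp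
          ((hfc.measurable.comp (hXF (j + 1) hj')).div
            (hPfc.measurable.comp (hXF j (le_of_lt (Finset.mem_range.mp hj)))))
      exact h1.mul ((((Real.continuous_rpow_const (hap n).le).measurable).comp
        (hPfc.measurable.comp (hXF n le_rfl))).inv)
    have hFmeas : Measurable F := hFmeasF.mono (ℱ.le n) le_rfl
    have hGmeas : Measurable G :=
      ((Real.continuous_rpow_const (hap n).le).measurable).comp
        (hfc.measurable.comp (hXm (n + 1)))
    have hGint : Integrable G μ := myIntegrableOfBounded μ
      hGmeas.aestronglyMeasurable B
      (fun ω => abs_le.mpr ⟨by linarith [hGnonneg ω], hGle ω⟩)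
    have hFGint : Integrable (F * G) μ := by
      refine myIntegrableOfBounded μ (hFmeas.mul hGmeas).aestronglyMeasurable (B ^ n * B)
        (fun ω => ?_)
      have : |F ω * G ω| = F ω * G ω :=
        abs_of_nonneg (mul_nonneg (hFnonneg ω) (hGnonneg ω))
      rw [Pi.mul_apply, this]
      exact mul_le_mul (hFle ω) (hGle ω) (hGnonneg ω) hBn
    have hPfaB : ∀ y, |∫ z, f z ^ a n ∂(P y)| ≤ B := by
      intro y
      have hint : Integrable (fun z => f z ^ a n) (P y) := by
        refine myIntegrableOfBounded _ (((Real.continuous_rpow_const (hap n).le).comp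
          hfc).aestronglyMeasurable) B (fun z => ?_)
        rw [abs_of_nonneg (Real.rpow_nonneg (hfpos z).le _)]
        exact myRpowLe (hfpos z).le (hfB z) hB1 (hap n).le (ha1 n)
      rw [abs_of_nonneg (integral_nonneg fun z => Real.rpow_nonneg (hfpos z).le _)]
      have := integral_mono hint (integrable_const B) (fun z =>
        myRpowLe (hfpos z).le (hfB z) hB1 (hap n).le (ha1 n))
      simpa using this
    have int1 : Integrable (fun ω => F ω * ∫ y, f y ^ a n ∂(P (X n ω))) μ := by
      refine myIntegrableOfBounded μ (hFmeas.mul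
        (((hPfac (a n) (hap n) (ha1 n)).measurable).comp (hXm n))).aestronglyMeasurable
        (B ^ n * B) (fun ω => ?_)
      rw [abs_mul, abs_of_nonneg (hFnonneg ω)]
      exact mul_le_mul (hFle ω) (hPfaB _) (abs_nonneg _) hBn
    have int2 : Integrable (fun ω => F ω * (Pf (X n ω)) ^ a n) μ := by
      refine myIntegrableOfBounded μ (hFmeas.mul
        (((Real.continuous_rpow_const (hap n).le).measurable).comp
        (hPfc.measurable.comp (hXm n)))).aestronglyMeasurable (B ^ n * B) (fun ω => ?_)
      have h0 : 0 ≤ (Pf (X n ω)) ^ a n := (hPfrpos ω).le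
      rw [abs_of_nonneg (mul_nonneg (hFnonneg ω) h0)]
      exact mul_le_mul (hFle ω)
        (myRpowLe (hPfpos _).le (hPfB _) hB1 (hap n).le (ha1 n)) h0 hBn
    have hcondmul := condExp_mul_of_stronglyMeasurable_left (m := ℱ n) (μ := μ)
      hFmeasF.stronglyMeasurable hFGint hGint
    have hmarkov := hMarkov (fun y => f y ^ a n)
      ((Real.continuous_rpow_const (hap n).le).comp hfc) n
    calc ∫ ω, ∏ j ∈ Finset.range (n + 1), (f (X (j + 1) ω) / Pf (X j ω)) ^ a j ∂μ
        = ∫ ω, (F * G) ω ∂μ := by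
          refine integral_congr_ae (Filter.Eventually.of_forall fun ω => ?_)
          simp only [Pi.mul_apply, hFdef, hGdef]
          rw [Finset.prod_range_succ, Real.div_rpow (hfpos _).le (hPfpos _).le]
          rw [div_eq_mul_inv]
          ring
      _ = ∫ ω, (μ[F * G|ℱ n]) ω ∂μ := (integral_condExp (ℱ.le n)).symm
      _ = ∫ ω, F ω * (μ[G|ℱ n]) ω ∂μ := by
          refine integral_congr_ae (hcondmul.mono fun ω hω => ?_)
          rw [hω, Pi.mul_apply]
      _ = ∫ ω, F ω * ∫ y, f y ^ a n ∂(P (X n ω)) ∂μ := by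
          refine integral_congr_ae (hmarkov.mono fun ω hω => ?_)
          simp only [hGdef]
          rw [hω]
      _ ≤ ∫ ω, F ω * (Pf (X n ω)) ^ a n ∂μ := by
          refine integral_mono int1 int2 (fun ω => ?_)
          exact mul_le_mul_of_nonneg_left
            (myJensenRpow (P (X n ω)) f hfc hf1 B hB1 hfB (hap n) (ha1 n)) (hFnonneg ω)
      _ = ∫ ω, ∏ j ∈ Finset.range n, (f (X (j + 1) ω) / Pf (X j ω)) ^ a j ∂μ := by
          refine integral_congr_ae (Filter.Eventually.of_forall fun ω => ?_)
          simp only [hFdef]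
          rw [mul_assoc, inv_mul_cancel₀ (ne_of_gt (hPfrpos ω)), mul_one]
      _ ≤ 1 := ih

/-- If `C ⊆ P(E)` is compact and `inf_{ζ∈C} I_d(ζ) > κ > 0` (i.e. every `ζ ∈ C`
admits some `f ∈ F_d` with `∫ log(f/Pf) dζ > κ`), then `C` is covered by finitely
many sets `{ζ : ∫ log(f_j/Pf_j) dζ > κ}` with `f_j ∈ F_d`, and consequently
`Q_{k,x}^n(C) ≤ m d exp(−κ Σ_{i=k}^{n+k-1} φ(i))`. -/
theorem compact_rate_set_covering_bound
    {Ω E : Type*} {m0 : MeasurableSpace Ω}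
    [MetricSpace E] [MeasurableSpace E] [BorelSpace E]
    (μ : Measure Ω) [IsProbabilityMeasure μ]
    (ℱ : Filtration ℕ m0)
    (P : Kernel E E) [IsMarkovKernel P]
    (hFeller : ∀ g : E → ℝ, Continuous g → (∀ y, |g y| ≤ 1) →
      Continuous fun y => ∫ z, g z ∂(P y))
    (X : ℕ → Ω → E) (hX : ∀ i, Measurable[ℱ i] (X i))
    (x : E) (hstart : ∀ᵐ ω ∂μ, X 0 ω = x)
    (hMarkov : ∀ (g : E → ℝ), Continuous g → ∀ i,
      μ[(fun ω => g (X (i + 1) ω)) | ℱ i]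
        =ᵐ[μ] fun ω => ∫ y, g y ∂(P (X i ω)))
    (φ : ℕ → ℝ) (hφ0 : φ 0 = 1)
    (hφpos : ∀ i, 0 < φ i) (hφle : ∀ i, φ i ≤ 1)
    (hφmono : ∀ i j, i ≤ j → φ j ≤ φ i)
    (d κ : ℝ) (hd : 1 ≤ d) (hκ : 0 < κ)
    (C : Set (ProbabilityMeasure E)) (hC : IsCompact C)
    (hinf : ∀ ζ ∈ C, ∃ f : E → ℝ, Continuous f ∧ (∀ y, 1 ≤ f y) ∧
      (∀ y z, f y ≤ d * f z) ∧
      κ < ∫ y, Real.log (f y / ∫ z, f z ∂(P y)) ∂(ζ : Measure E)) :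
    ∃ (m : ℕ) (g : Fin m → E → ℝ),
      (∀ j, Continuous (g j)) ∧ (∀ j y, 1 ≤ g j y) ∧
      (∀ j y z, g j y ≤ d * g j z) ∧
      C ⊆ ⋃ j : Fin m, {ζ : ProbabilityMeasure E |
        κ < ∫ y, Real.log (g j y / ∫ z, g j z ∂(P y)) ∂(ζ : Measure E)} ∧
      ∀ k n : ℕ,
        (μ {ω | ∃ ζ ∈ C, (ζ : Measure E) = discountedEmpirical φ k n X ω}).toReal
          ≤ m * d * Real.exp (-κ * ∑ i ∈ Finset.Ico k (n + k), φ i) := by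
  classical
  have hd0 : (0:ℝ) < d := lt_of_lt_of_le zero_lt_one hd
  have hΩne : Nonempty Ω := by
    by_contra h
    rw [not_nonempty_iff] at h
    have h1 : μ Set.univ = 1 := measure_univ
    rw [Set.univ_eq_empty_iff.mpr h, measure_empty] at h1
    exact zero_ne_one h1
  obtain ⟨ω₀⟩ := hΩne
  have hsel : ∀ i : C, ∃ f : E → ℝ, Continuous f ∧ (∀ y, 1 ≤ f y) ∧
      (∀ y z, f y ≤ d * f z) ∧
      κ < ∫ y, Real.log (f y / ∫ z, f z ∂(P y))
        ∂((i : ProbabilityMeasure E) : Measure E) := fun i => hinf i.1 i.2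
  choose fI hfIc hfI1 hfId hfIκ using hsel
  -- Feller continuity for bounded continuous functions
  have feller' : ∀ (h : E → ℝ) (B : ℝ), Continuous h → 0 < B → (∀ y, |h y| ≤ B) →
      Continuous fun y => ∫ z, h z ∂(P y) := by
    intro h B hc hB0 hbd
    have h1 : Continuous fun y => ∫ z, h z / B ∂(P y) := by
      refine hFeller _ (hc.div_const B) fun y => ?_
      rw [abs_div, abs_of_pos hB0]
      exact div_le_one_of_le₀ (hbd y) hB0.le
    have heq : (fun y => ∫ z, h z ∂(P y)) = fun y => B * ∫ z, h z / B ∂(P y) := by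
      funext y
      rw [integral_div]
      field_simp
    rw [heq]
    exact continuous_const.mul h1
  -- basic facts for each element of F_d
  have hBfacts : ∀ (f : E → ℝ), Continuous f → (∀ y, 1 ≤ f y) → (∀ y z, f y ≤ d * f z) →
      (Continuous fun y => ∫ z, f z ∂(P y)) ∧
      (∀ a : ℝ, 0 < a → a ≤ 1 → Continuous fun y => ∫ z, f z ^ a ∂(P y)) ∧
      (∀ y, 1 ≤ ∫ z, f z ∂(P y)) ∧
      (∀ y, 1 / d ≤ f y / ∫ z, f z ∂(P y)) ∧ (∀ y, f y / ∫ z, f z ∂(P y) ≤ d) ∧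
      (1 ≤ d * f (X 0 ω₀)) ∧ (∀ y, f y ≤ d * f (X 0 ω₀)) := by
    intro f hfc hf1 hfd
    have hB1 : (1:ℝ) ≤ d * f (X 0 ω₀) := by nlinarith [hf1 (X 0 ω₀)]
    have hfB : ∀ y, f y ≤ d * f (X 0 ω₀) := fun y => hfd y _
    have habs : ∀ y, |f y| ≤ d * f (X 0 ω₀) :=
      fun y => abs_le.mpr ⟨by linarith [hf1 y, hfB y], hfB y⟩
    obtain ⟨h1, h2, h3, h4⟩ := myRatioFacts P d hd f hfc hf1 hfd _ hfB
    refine ⟨feller' f _ hfc (by linarith) habs, ?_, h1, h3, h4, hB1, hfB⟩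
    intro a ha0 ha1
    refine feller' _ (d * f (X 0 ω₀)) ((Real.continuous_rpow_const ha0.le).comp hfc)
      (by linarith) fun y => ?_
    rw [abs_of_nonneg (Real.rpow_nonneg (by linarith [hf1 y] : (0:ℝ) ≤ f y) a)]
    exact myRpowLe (by linarith [hf1 y]) (hfB y) hB1 ha0.le ha1
  -- the log integrands: continuity and uniform bound
  have hLfacts : ∀ (f : E → ℝ), Continuous f → (∀ y, 1 ≤ f y) → (∀ y z, f y ≤ d * f z) →
      (Continuous fun y => Real.log (f y / ∫ z, f z ∂(P y))) ∧
      (∀ y, |Real.log (f y / ∫ z, f z ∂(P y))| ≤ Real.log d) := by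
    intro f hfc hf1 hfd
    obtain ⟨hPfc, _, hPf1, hrlo, hrhi, hB1, hfB⟩ := hBfacts f hfc hf1 hfd
    have hPfpos : ∀ y, (0:ℝ) < ∫ z, f z ∂(P y) :=
      fun y => lt_of_lt_of_le zero_lt_one (hPf1 y)
    have hrpos : ∀ y, (0:ℝ) < f y / ∫ z, f z ∂(P y) := fun y =>
      lt_of_lt_of_le (by positivity) (hrlo y)
    constructor
    · exact (hfc.div hPfc fun y => ne_of_gt (hPfpos y)).log fun y => ne_of_gt (hrpos y)
    · intro y
      refine abs_le.mpr ⟨?_, Real.log_le_log (hrpos y) (hrhi y)⟩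
      rw [← Real.log_inv]
      exact Real.log_le_log (inv_pos.mpr hd0) (by rw [← one_div]; exact hrlo y)
  -- the covering sets are open
  set V : C → Set (ProbabilityMeasure E) := fun i =>
    {ζ : ProbabilityMeasure E |
      κ < ∫ y, Real.log (fI i y / ∫ z, fI i z ∂(P y)) ∂(ζ : Measure E)} with hV
  have hVopen : ∀ i, IsOpen (V i) := by
    intro i
    obtain ⟨hLc, hLb⟩ := hLfacts (fI i) (hfIc i) (hfI1 i) (hfId i)
    set bcf : BoundedContinuousFunction E ℝ :=
      BoundedContinuousFunction.ofNormedAddCommGroup _ hLc (Real.log d)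
        (fun y => by rw [Real.norm_eq_abs]; exact hLb y) with hbcf
    have hcont := ProbabilityMeasure.continuous_integral_boundedContinuousFunction
      (X := E) bcf
    have hVi : V i = (fun ζ : ProbabilityMeasure E =>
        ∫ y, bcf y ∂(ζ : Measure E)) ⁻¹' Set.Ioi κ := rfl
    rw [hVi]
    exact IsOpen.preimage hcont isOpen_Ioi
  have hcover : C ⊆ ⋃ i : C, V i := fun ζ hζ => Set.mem_iUnion.mpr ⟨⟨ζ, hζ⟩, hfIκ ⟨ζ, hζ⟩⟩
  obtain ⟨t, ht⟩ := hC.elim_finite_subcover V hVopen hcover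
  set e := t.equivFin with he
  refine ⟨t.card, fun j => fI (e.symm j).1, fun j => hfIc _, fun j y => hfI1 _ y,
    fun j y z => hfId _ y z, ?_, ?_⟩
  · -- covering statement
    intro ζ hζ
    obtain ⟨i, hit, hmem⟩ := Set.mem_iUnion₂.mp (ht hζ)
    refine Set.mem_iUnion.mpr ⟨e ⟨i, hit⟩, ?_⟩
    simp only [hV, Set.mem_setOf_eq] at hmem
    simp only [Set.mem_setOf_eq, Equiv.symm_apply_apply]
    exact hmem
  · -- the probability bound
    intro k n
    rcases Nat.eq_zero_or_pos n with rfl | hn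
    · have hempty : {ω | ∃ ζ ∈ C, (ζ : Measure E) = discountedEmpirical φ k 0 X ω} = ∅ := by
        ext ω
        simp only [Set.mem_setOf_eq, Set.mem_empty_iff_false, iff_false, not_exists]
        rintro ζ ⟨hζ, heq⟩
        have h0 : discountedEmpirical φ k 0 X ω = 0 := by
          simp [discountedEmpirical]
        have h1 : (ζ : Measure E) Set.univ = 1 := measure_univ
        rw [heq, h0] at h1
        simp at h1
      rw [hempty, measure_empty]
      simp only [ENNReal.toReal_zero]
      positivity
    · set Φ := ∑ i ∈ Finset.Ico k (n + k), φ i with hΦdef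
      have hΦpos : 0 < Φ := Finset.sum_pos (fun i _ => hφpos i)
        (Finset.nonempty_Ico.mpr (by omega))
      set ε := Real.exp (κ * Φ) with hε
      have hε0 : 0 < ε := Real.exp_pos _
      have hXm : ∀ i, Measurable (X i) := fun i => (hX i).mono (ℱ.le i) le_rfl
      -- Chernoff bound for each f ∈ F_d
      have keyf : ∀ (f : E → ℝ), Continuous f → (∀ y, 1 ≤ f y) → (∀ y z, f y ≤ d * f z) →
          (μ {ω | ε ≤ ∏ l ∈ Finset.range n,
              (f (X l ω) / ∫ z, f z ∂(P (X l ω))) ^ φ (k + l)}).toReal ≤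
            d * Real.exp (-(κ * Φ)) := by
        intro f hfc hf1 hfd
        obtain ⟨hPfc, hPfac, hPf1, hrlo, hrhi, hB1, hfB⟩ := hBfacts f hfc hf1 hfd
        have hPfpos : ∀ y, (0:ℝ) < ∫ z, f z ∂(P y) :=
          fun y => lt_of_lt_of_le zero_lt_one (hPf1 y)
        have hfpos : ∀ y, (0:ℝ) < f y := fun y => lt_of_lt_of_le zero_lt_one (hf1 y)
        have hap : ∀ l : ℕ, 0 < φ (k + l) := fun l => hφpos _
        have ha1 : ∀ l : ℕ, φ (k + l) ≤ 1 := fun l => hφle _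
        have hPfB : ∀ y, (∫ z, f z ∂(P y)) ≤ d * f (X 0 ω₀) :=
          (myRatioFacts P d hd f hfc hf1 hfd _ hfB).2.1
        -- pointwise bound between the two products
        have hpoint : ∀ ω, (∏ l ∈ Finset.range n,
            (f (X l ω) / ∫ z, f z ∂(P (X l ω))) ^ φ (k + l)) ≤
            d * ∏ l ∈ Finset.range n,
              (f (X (l + 1) ω) / ∫ z, f z ∂(P (X l ω))) ^ φ (k + l) := by
          intro ω
          have htel : (∏ l ∈ Finset.range n, (f (X l ω) / f (X (l + 1) ω)) ^ φ (k + l)) ≤ d :=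
            myProdTelescope hd (fun l => f (X l ω)) (fun l => hf1 _) (fun l l' => hfd _ _)
              (fun l => φ (k + l)) hap (ha1 0) (fun i j hij => hφmono _ _ (by omega)) n
          have hsplit : (∏ l ∈ Finset.range n,
              (f (X l ω) / ∫ z, f z ∂(P (X l ω))) ^ φ (k + l)) =
              (∏ l ∈ Finset.range n,
                (f (X (l + 1) ω) / ∫ z, f z ∂(P (X l ω))) ^ φ (k + l)) *
              ∏ l ∈ Finset.range n, (f (X l ω) / f (X (l + 1) ω)) ^ φ (k + l) := by
            rw [← Finset.prod_mul_distrib]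
            refine Finset.prod_congr rfl fun l _ => ?_
            rw [← Real.mul_rpow (div_nonneg (hfpos _).le (hPfpos _).le)
              (div_nonneg (hfpos _).le (hfpos _).le)]
            congr 1
            rw [div_mul_div_comm, mul_comm (f (X (l + 1) ω)) (f (X l ω)),
              mul_div_mul_right _ _ (ne_of_gt (hfpos (X (l + 1) ω)))]
          rw [hsplit, mul_comm d]
          exact mul_le_mul_of_nonneg_left htel
            (Finset.prod_nonneg fun l _ =>
              Real.rpow_nonneg (div_nonneg (hfpos _).le (hPfpos _).le) _)
        -- integrability of the two products
        have hfacle : ∀ (b : Ω → E) ω, (f (b ω) / ∫ z, f z ∂(P (X 0 ω₀))) ≤ d * f (X 0 ω₀) :=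
          fun b ω => le_trans (div_le_self (hfpos _).le (hPf1 _)) (hfB _)
        have hmeas1 : Measurable fun ω => ∏ l ∈ Finset.range n,
            (f (X l ω) / ∫ z, f z ∂(P (X l ω))) ^ φ (k + l) :=
          Finset.measurable_prod _ fun l _ =>
            ((Real.continuous_rpow_const (hap l).le).measurable).comp
              ((hfc.measurable.comp (hXm l)).div (hPfc.measurable.comp (hXm l)))
        have hmeas2 : Measurable fun ω => ∏ l ∈ Finset.range n,
            (f (X (l + 1) ω) / ∫ z, f z ∂(P (X l ω))) ^ φ (k + l) :=
          Finset.measurable_prod _ fun l _ =>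
            ((Real.continuous_rpow_const (hap l).le).measurable).comp
              ((hfc.measurable.comp (hXm (l + 1))).div (hPfc.measurable.comp (hXm l)))
        have hbd1 : ∀ (u : ℕ → Ω → E) ω, (∀ l, 0 ≤ f (u l ω) / ∫ z, f z ∂(P (X l ω))) →
            (∀ l, f (u l ω) / (∫ z, f z ∂(P (X l ω))) ≤ d * f (X 0 ω₀)) →
            |∏ l ∈ Finset.range n, (f (u l ω) / ∫ z, f z ∂(P (X l ω))) ^ φ (k + l)| ≤
              (d * f (X 0 ω₀)) ^ n := by
          intro u ω h0 hb
          have hnn : ∀ l ∈ Finset.range n,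
              0 ≤ (f (u l ω) / ∫ z, f z ∂(P (X l ω))) ^ φ (k + l) :=
            fun l _ => Real.rpow_nonneg (h0 l) _
          rw [abs_of_nonneg (Finset.prod_nonneg hnn)]
          calc (∏ l ∈ Finset.range n, (f (u l ω) / ∫ z, f z ∂(P (X l ω))) ^ φ (k + l))
              ≤ ∏ _l ∈ Finset.range n, (d * f (X 0 ω₀)) :=
                Finset.prod_le_prod hnn (fun l _ =>
                  myRpowLe (h0 l) (hb l) hB1 (hap l).le (ha1 l))
            _ = (d * f (X 0 ω₀)) ^ n := by rw [Finset.prod_const, Finset.card_range]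
        have hint1 : Integrable (fun ω => ∏ l ∈ Finset.range n,
            (f (X l ω) / ∫ z, f z ∂(P (X l ω))) ^ φ (k + l)) μ :=
          myIntegrableOfBounded μ hmeas1.aestronglyMeasurable _
            (fun ω => hbd1 (fun l => X l) ω
              (fun l => div_nonneg (hfpos _).le (hPfpos _).le)
              (fun l => le_trans (div_le_self (hfpos _).le (hPf1 _)) (hfB _)))
        have hint2 : Integrable (fun ω => ∏ l ∈ Finset.range n,
            (f (X (l + 1) ω) / ∫ z, f z ∂(P (X l ω))) ^ φ (k + l)) μ :=
          myIntegrableOfBounded μ hmeas2.aestronglyMeasurable _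
            (fun ω => hbd1 (fun l => X (l + 1)) ω
              (fun l => div_nonneg (hfpos _).le (hPfpos _).le)
              (fun l => le_trans (div_le_self (hfpos _).le (hPf1 _)) (hfB _)))
        -- expectation chain
        have hsup : ∫ ω, ∏ l ∈ Finset.range n,
            (f (X (l + 1) ω) / ∫ z, f z ∂(P (X l ω))) ^ φ (k + l) ∂μ ≤ 1 :=
          mySupermart μ ℱ P X hX hMarkov f hfc hf1 _ hB1 hfB hPfc hPfac
            (fun l => φ (k + l)) hap ha1 n
        have hchain : ∫ ω, ∏ l ∈ Finset.range n,
            (f (X l ω) / ∫ z, f z ∂(P (X l ω))) ^ φ (k + l) ∂μ ≤ d := by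
          calc ∫ ω, ∏ l ∈ Finset.range n,
              (f (X l ω) / ∫ z, f z ∂(P (X l ω))) ^ φ (k + l) ∂μ
              ≤ ∫ ω, d * ∏ l ∈ Finset.range n,
                (f (X (l + 1) ω) / ∫ z, f z ∂(P (X l ω))) ^ φ (k + l) ∂μ :=
                integral_mono hint1 (hint2.const_mul d) hpoint
            _ = d * ∫ ω, ∏ l ∈ Finset.range n,
                (f (X (l + 1) ω) / ∫ z, f z ∂(P (X l ω))) ^ φ (k + l) ∂μ :=
                integral_const_mul d _
            _ ≤ d * 1 := mul_le_mul_of_nonneg_left hsup hd0.le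
            _ = d := mul_one d
        have hmarkovineq := mul_meas_ge_le_integral_of_nonneg
          (Filter.Eventually.of_forall (fun ω => Finset.prod_nonneg fun l _ =>
            Real.rpow_nonneg (div_nonneg (hfpos _).le (hPfpos _).le) _)) hint1 ε
        have h2 : (μ {ω | ε ≤ ∏ l ∈ Finset.range n,
            (f (X l ω) / ∫ z, f z ∂(P (X l ω))) ^ φ (k + l)}).toReal ≤ d / ε := by
          rw [le_div_iff₀ hε0, mul_comm]
          exact le_trans hmarkovineq hchain
        calc (μ {ω | ε ≤ ∏ l ∈ Finset.range n,
            (f (X l ω) / ∫ z, f z ∂(P (X l ω))) ^ φ (k + l)}).toReal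
            ≤ d / ε := h2
          _ = d * Real.exp (-(κ * Φ)) := by
              rw [hε, Real.exp_neg, div_eq_mul_inv]
      -- inclusion of the event in the union
      have hsub : {ω | ∃ ζ ∈ C, (ζ : Measure E) = discountedEmpirical φ k n X ω} ⊆
          ⋃ j : Fin t.card, {ω | ε ≤ ∏ l ∈ Finset.range n,
            (fI (e.symm j).1 (X l ω) /
              ∫ z, fI (e.symm j).1 z ∂(P (X l ω))) ^ φ (k + l)} := by
        rintro ω ⟨ζ, hζC, hζeq⟩
        obtain ⟨i, hit, hmem⟩ := Set.mem_iUnion₂.mp (ht hζC)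
        refine Set.mem_iUnion.mpr ⟨e ⟨i, hit⟩, ?_⟩
        simp only [Set.mem_setOf_eq, Equiv.symm_apply_apply]
        obtain ⟨hLc, hLb⟩ := hLfacts (fI i) (hfIc i) (hfI1 i) (hfId i)
        obtain ⟨hPfc, _, hPf1, hrlo, hrhi, hB1, hfB⟩ :=
          hBfacts (fI i) (hfIc i) (hfI1 i) (hfId i)
        simp only [hV, Set.mem_setOf_eq] at hmem
        rw [hζeq] at hmem
        have hLi_int : ∀ z : E, Integrable
            (fun y => Real.log (fI i y / ∫ z', fI i z' ∂(P y))) (Measure.dirac z) :=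
          fun z => myIntegrableOfBounded _ hLc.aestronglyMeasurable (Real.log d)
            (fun y => hLb y)
        have hcalc : ∫ y, Real.log (fI i y / ∫ z, fI i z ∂(P y))
            ∂(discountedEmpirical φ k n X ω) =
            Φ⁻¹ * ∑ i' ∈ Finset.Ico k (n + k), φ i' *
              Real.log (fI i (X (i' - k) ω) / ∫ z, fI i z ∂(P (X (i' - k) ω))) := by
          simp only [discountedEmpirical]
          rw [integral_smul_measure,
            integral_finset_sum_measure
              (fun i' _ => (hLi_int _).smul_measure ENNReal.ofReal_ne_top)]
          have hc : (∑ i' ∈ Finset.Ico k (n + k), ENNReal.ofReal (φ i')) =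
              ENNReal.ofReal Φ := by
            rw [hΦdef, ENNReal.ofReal_sum_of_nonneg (fun i' _ => (hφpos i').le)]
          rw [hc, ENNReal.toReal_inv, ENNReal.toReal_ofReal hΦpos.le, smul_eq_mul]
          congr 1
          refine Finset.sum_congr rfl fun i' _ => ?_
          rw [integral_smul_measure, integral_dirac' _ _ hLc.stronglyMeasurable,
            ENNReal.toReal_ofReal (hφpos i').le, smul_eq_mul]
        rw [hcalc] at hmem
        have hS : κ * Φ < ∑ i' ∈ Finset.Ico k (n + k), φ i' *
            Real.log (fI i (X (i' - k) ω) / ∫ z, fI i z ∂(P (X (i' - k) ω))) := by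
          rw [inv_mul_eq_div] at hmem
          exact (lt_div_iff₀ hΦpos).mp hmem
        have hreindex : (∑ i' ∈ Finset.Ico k (n + k), φ i' *
            Real.log (fI i (X (i' - k) ω) / ∫ z, fI i z ∂(P (X (i' - k) ω)))) =
            ∑ l ∈ Finset.range n, φ (k + l) *
              Real.log (fI i (X l ω) / ∫ z, fI i z ∂(P (X l ω))) := by
          rw [Finset.sum_Ico_eq_sum_range]
          simp [Nat.add_sub_cancel_left, Nat.add_sub_cancel]
        rw [hreindex] at hS
        have hrpos : ∀ y, (0:ℝ) < fI i y / ∫ z, fI i z ∂(P y) := fun y =>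
          lt_of_lt_of_le (by positivity) (hrlo y)
        have hprod : Real.exp (∑ l ∈ Finset.range n, φ (k + l) *
            Real.log (fI i (X l ω) / ∫ z, fI i z ∂(P (X l ω)))) =
            ∏ l ∈ Finset.range n,
              (fI i (X l ω) / ∫ z, fI i z ∂(P (X l ω))) ^ φ (k + l) := by
          rw [Real.exp_sum]
          refine Finset.prod_congr rfl fun l _ => ?_
          rw [Real.rpow_def_of_pos (hrpos (X l ω)), mul_comm]
        rw [hε]
        exact le_trans (Real.exp_le_exp.mpr hS.le) (le_of_eq hprod)
      -- put everything together
      have h1 : μ {ω | ∃ ζ ∈ C, (ζ : Measure E) = discountedEmpirical φ k n X ω} ≤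
          ∑ j : Fin t.card, μ {ω | ε ≤ ∏ l ∈ Finset.range n,
            (fI (e.symm j).1 (X l ω) /
              ∫ z, fI (e.symm j).1 z ∂(P (X l ω))) ^ φ (k + l)} :=
        le_trans (measure_mono hsub) (measure_iUnion_fintype_le μ _)
      have hne : ∀ j ∈ (Finset.univ : Finset (Fin t.card)),
          μ {ω | ε ≤ ∏ l ∈ Finset.range n,
            (fI (e.symm j).1 (X l ω) /
              ∫ z, fI (e.symm j).1 z ∂(P (X l ω))) ^ φ (k + l)} ≠ ⊤ :=
        fun j _ => measure_ne_top μ _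
      have h2 := ENNReal.toReal_mono
        ((ENNReal.sum_lt_top.mpr (fun j _ => measure_lt_top μ _)).ne) h1
      rw [ENNReal.toReal_sum hne] at h2
      have h3 : (∑ j : Fin t.card, (μ {ω | ε ≤ ∏ l ∈ Finset.range n,
          (fI (e.symm j).1 (X l ω) /
            ∫ z, fI (e.symm j).1 z ∂(P (X l ω))) ^ φ (k + l)}).toReal) ≤
          ∑ _j : Fin t.card, d * Real.exp (-(κ * Φ)) :=
        Finset.sum_le_sum fun j _ => keyf (fI (e.symm j).1) (hfIc _) (hfI1 _) (hfId _)
      rw [Finset.sum_const, Finset.card_univ, Fintype.card_fin, nsmul_eq_mul] at h3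
      rw [neg_mul]
      calc (μ {ω | ∃ ζ ∈ C, (ζ : Measure E) = discountedEmpirical φ k n X ω}).toReal
          ≤ ↑t.card * (d * Real.exp (-(κ * Φ))) := le_trans h2 h3
        _ = ↑t.card * d * Real.exp (-(κ * Φ)) := by ring
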